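/- Let χ : {1,…,n} → {ℓ,c,r} with χ⁻¹(c) ∩ {2,…,n−1} nonempty, and let l₁ be its least element. Then the map α₁' : IBNC(χ) → IBNC(χ₁) × IBNC(χ') defined by α₁'(π) = (π|_{[1,l₁]}, π|_{[l₁,n]}) is surjective: for every π₁ ∈ IBNC(χ₁) and π' ∈ IBNC(χ'), the partition of {1,…,n} obtained by keeping all blocks of π₁ and π' not containing l₁ and merging the block of π₁ containing l₁ with the block of π' containing l₁ belongs to IBNC(χ). -/

import Mathlib

namespace FFB

/-- The three letters ℓ, c, r labelling the faces. -/
inductive Letter : Type where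
  | l | c | r
deriving DecidableEq

/-- `x` is one of the letters `ℓ`, `c`. -/
def isLC (x : Letter) : Prop := x = Letter.l ∨ x = Letter.c

variable {α : Type*}

/-- The total order `≺_χ` on the index set determined by `χ`:
the elements of `χ⁻¹{ℓ,c}` in increasing order followed by the elements of
`χ⁻¹{r}` in decreasing order. -/
def chiLT [LT α] (χ : α → Letter) (i j : α) : Prop :=
  (isLC (χ i) ∧ isLC (χ j) ∧ i < j)
  ∨ (isLC (χ i) ∧ χ j = Letter.r)
  ∨ (χ i = Letter.r ∧ χ j = Letter.r ∧ j < i)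

/-- A partition (equivalence relation) `π` is `χ`-noncrossing if there is no quadruple
`s₁ ≺_χ r₁ ≺_χ s₂ ≺_χ r₂` with `s₁ ∼ s₂`, `r₁ ∼ r₂` lying in different blocks. -/
def ChiNoncrossing [LT α] (χ : α → Letter) (π : Setoid α) : Prop :=
  ∀ s₁ r₁ s₂ r₂ : α, chiLT χ s₁ r₁ → chiLT χ r₁ s₂ → chiLT χ s₂ r₂ →
    π s₁ s₂ → π r₁ r₂ → π s₁ r₁

/-- A partition `π` is `χ`-interval if whenever `i < j < k`, `i ∼ k` and `χ j = c`,
then `i, j, k` all lie in the same block. -/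
def ChiInterval [LT α] (χ : α → Letter) (π : Setoid α) : Prop :=
  ∀ i j k : α, i < j → j < k → χ j = Letter.c → π i k → π i j

/-- The set of interval-bi-noncrossing partitions with respect to `χ`. -/
def IBNC [LT α] (χ : α → Letter) : Set (Setoid α) :=
  {π | ChiNoncrossing χ π ∧ ChiInterval χ π}

/-- The set of `χ`-noncrossing partitions. -/
def NC [LT α] (χ : α → Letter) : Set (Setoid α) :=
  {π | ChiNoncrossing χ π}

/-- Restriction of a partition of `α` to a subset `V ⊆ α`. -/
def restrict (V : Set α) (σ : Setoid α) : Setoid V := Setoid.comap Subtype.val σ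

/-- Restriction of `χ` to a subset `V ⊆ α`. -/
def restChi (V : Set α) (χ : α → Letter) : V → Letter := fun x => χ x.1

/- `mu` is the Möbius function of the finite poset `P` (with the induced order):
it is the (two-sided) convolution inverse of the zeta function. -/
open Classical in
def IsMobius {β : Type*} [PartialOrder β] (P : Set β) (mu : β → β → ℂ) : Prop :=
  ∀ a ∈ P, ∀ b ∈ P, a ≤ b →
    ((∑ᶠ c ∈ {c | c ∈ P ∧ a ≤ c ∧ c ≤ b}, mu a c) = if a = b then 1 else 0) ∧
    ((∑ᶠ c ∈ {c | c ∈ P ∧ a ≤ c ∧ c ≤ b}, mu c b) = if a = b then 1 else 0)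

section Moments

variable {A : Type*} [Ring A] [LinearOrder α] [Finite α]

/-- `φ_V(z₁,…,zₙ) = φ(z_{l₁} ⋯ z_{l_k})` where `V = {l₁ < ⋯ < l_k}`. -/
noncomputable def phiV (φ : A → ℂ) (z : α → A) (V : Set α) : ℂ :=
  φ (((Set.toFinite V).toFinset.sort (· ≤ ·)).map z).prod

/-- `φ_σ(z₁,…,zₙ) = ∏_{V ∈ σ} φ_V(z₁,…,zₙ)`. -/
noncomputable def phiPart (φ : A → ℂ) (z : α → A) (σ : Setoid α) : ℂ :=
  ∏ᶠ q : Quotient σ, phiV φ z {y | Quotient.mk σ y = q}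

/-- The free-free-Boolean cumulant
`κ_{χ,π}(z₁,…,zₙ) = Σ_{σ ∈ IBNC(χ), σ ≤ π} μ_{IBNC(χ)}(σ,π) φ_σ(z₁,…,zₙ)`,
where `mu` is (a function which is) the Möbius function of `IBNC(χ)`. -/
noncomputable def cum (φ : A → ℂ) (χ : α → Letter)
    (mu : Setoid α → Setoid α → ℂ) (z : α → A) (π : Setoid α) : ℂ :=
  ∑ᶠ σ ∈ {σ | σ ∈ IBNC χ ∧ σ ≤ π}, mu σ π * phiPart φ z σ

end Moments

/-- Combinatorial free-free-Boolean independence: mixed cumulants vanish.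
`F i x` is the face of the `i`-th triple labelled by the letter `x`. -/
def CombFFB {A : Type*} [Ring A] [Algebra ℂ A] (φ : A →ₗ[ℂ] ℂ) {I : Type*}
    (F : I → Letter → NonUnitalSubalgebra ℂ A) : Prop :=
  ∀ (n : ℕ) (χ : Fin n → Letter) (ω : Fin n → I) (z : Fin n → A),
    (∀ k, z k ∈ F (ω k) (χ k)) → (¬ ∃ i, ∀ k, ω k = i) →
    ∀ mu : Setoid (Fin n) → Setoid (Fin n) → ℂ, IsMobius (IBNC χ) mu →
      cum (⇑φ) χ mu z ⊤ = 0

end FFB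

namespace FFB

/-- The partition of `{1,…,n}` obtained from a partition `π₁` of `[1,l₁]` and a partition
`π'` of `[l₁,n]` by keeping all blocks not containing `l₁` and merging the two blocks
containing `l₁` (described here as an equivalence relation). -/
def glue {n : ℕ} (l₁ : Fin n) (π₁ : Setoid (Set.Iic l₁)) (π' : Setoid (Set.Ici l₁))
    (x y : Fin n) : Prop :=
  (∃ hx : x ∈ Set.Iic l₁, ∃ hy : y ∈ Set.Iic l₁, π₁ ⟨x, hx⟩ ⟨y, hy⟩) ∨
  (∃ hx : x ∈ Set.Ici l₁, ∃ hy : y ∈ Set.Ici l₁, π' ⟨x, hx⟩ ⟨y, hy⟩) ∨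
  (∃ hx : x ∈ Set.Iic l₁, ∃ hy : y ∈ Set.Ici l₁,
     π₁ ⟨x, hx⟩ ⟨l₁, Set.self_mem_Iic⟩ ∧ π' ⟨l₁, Set.self_mem_Ici⟩ ⟨y, hy⟩) ∨
  (∃ hx : x ∈ Set.Ici l₁, ∃ hy : y ∈ Set.Iic l₁,
     π₁ ⟨y, hy⟩ ⟨l₁, Set.self_mem_Iic⟩ ∧ π' ⟨l₁, Set.self_mem_Ici⟩ ⟨x, hx⟩)


section Aux

variable {n : ℕ} {χ : Fin n → Letter} {l₁ : Fin n}

lemma isLC_ne_r {x : Letter} (h : isLC x) : x ≠ Letter.r := by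
  rcases h with h | h <;> simp [h]

lemma chiLT_trans {a b c : Fin n} (h1 : chiLT χ a b) (h2 : chiLT χ b c) :
    chiLT χ a c := by
  rcases h1 with ⟨ha, hb, hab⟩ | ⟨ha, hb⟩ | ⟨ha, hb, hab⟩ <;>
    rcases h2 with ⟨hb', hc', hbc⟩ | ⟨hb', hc'⟩ | ⟨hb', hc', hbc⟩ <;>
    first
    | exact Or.inl ⟨ha, hc', lt_trans hab hbc⟩
    | exact Or.inr (Or.inl ⟨ha, hc'⟩)
    | exact Or.inr (Or.inr ⟨ha, hc', lt_trans hbc hab⟩)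
    | exact absurd hb (isLC_ne_r hb')
    | exact absurd hb' (isLC_ne_r hb)

lemma chiLT_irrefl {a : Fin n} : ¬ chiLT χ a a := by
  rintro (⟨-, -, h⟩ | ⟨h1, h2⟩ | ⟨-, -, h⟩)
  exacts [lt_irrefl _ h, absurd h2 (isLC_ne_r h1), lt_irrefl _ h]

lemma lemA (hc : χ l₁ = Letter.c) {a b : Fin n} (ha : a ≤ l₁) (hb : l₁ ≤ b)
    (h : chiLT χ a b) :
    isLC (χ a) ∧ (a = l₁ ∨ chiLT χ a l₁) ∧ (b = l₁ ∨ chiLT χ l₁ b) := by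
  have hLC : isLC (χ l₁) := Or.inr hc
  rcases h with ⟨h1, h2, h3⟩ | ⟨h1, h2⟩ | ⟨h1, h2, h3⟩
  · refine ⟨h1, ?_, ?_⟩
    · rcases eq_or_lt_of_le ha with he | hlt
      · exact Or.inl he
      · exact Or.inr (Or.inl ⟨h1, hLC, hlt⟩)
    · rcases eq_or_lt_of_le hb with he | hlt
      · exact Or.inl he.symm
      · exact Or.inr (Or.inl ⟨hLC, h2, hlt⟩)
  · refine ⟨h1, ?_, Or.inr (Or.inr (Or.inl ⟨hLC, h2⟩))⟩
    rcases eq_or_lt_of_le ha with he | hlt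
    · exact Or.inl he
    · exact Or.inr (Or.inl ⟨h1, hLC, hlt⟩)
  · have hal : a < l₁ := lt_of_le_of_ne ha (by rintro rfl; rw [hc] at h1; cases h1)
    exact absurd (lt_of_lt_of_le (lt_trans h3 hal) hb) (lt_irrefl b)

lemma lemB (hc : χ l₁ = Letter.c) {a b : Fin n} (ha : l₁ ≤ a) (hb : b ≤ l₁)
    (h : chiLT χ a b) :
    χ b = Letter.r ∧ chiLT χ l₁ b ∧ (a = l₁ ∨ chiLT χ l₁ a) := by
  have hLC : isLC (χ l₁) := Or.inr hc
  rcases h with ⟨h1, h2, h3⟩ | ⟨h1, h2⟩ | ⟨h1, h2, h3⟩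
  · exact absurd (lt_of_lt_of_le h3 hb) (not_lt.mpr ha)
  · refine ⟨h2, Or.inr (Or.inl ⟨hLC, h2⟩), ?_⟩
    rcases eq_or_lt_of_le ha with he | hlt
    · exact Or.inl he.symm
    · exact Or.inr (Or.inl ⟨hLC, h1, hlt⟩)
  · exact ⟨h2, Or.inr (Or.inl ⟨hLC, h2⟩), Or.inr (Or.inr (Or.inl ⟨hLC, h1⟩))⟩

lemma lemX (hc : χ l₁ = Letter.c) {a b c : Fin n} (ha : l₁ ≤ a) (hb : b ≤ l₁)
    (hcc : l₁ ≤ c) (h1 : chiLT χ a b) (h2 : chiLT χ b c) : False := by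
  have hr := (lemB hc ha hb h1).1
  exact absurd hr (isLC_ne_r (lemA hc hb hcc h2).1)

lemma lemC (hc : χ l₁ = Letter.c) {a : Fin n} (ha : l₁ ≤ a) :
    a = l₁ ∨ chiLT χ l₁ a := by
  rcases eq_or_lt_of_le ha with he | hlt
  · exact Or.inl he.symm
  · rcases hx : χ a with _ | _ | _
    · exact Or.inr (Or.inl ⟨Or.inr hc, Or.inl hx, hlt⟩)
    · exact Or.inr (Or.inl ⟨Or.inr hc, Or.inr hx, hlt⟩)
    · exact Or.inr (Or.inr (Or.inl ⟨Or.inr hc, hx⟩))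

lemma chiLT_rest {V : Set (Fin n)} {a b : V} :
    chiLT (restChi V χ) a b ↔ chiLT χ a.1 b.1 := Iff.rfl

variable {π₁ : Setoid (Set.Iic l₁)} {π' : Setoid (Set.Ici l₁)}

lemma glue_refl (x : Fin n) : glue l₁ π₁ π' x x := by
  rcases le_total x l₁ with h | h
  · exact Or.inl ⟨h, h, Setoid.refl _⟩
  · exact Or.inr (Or.inl ⟨h, h, Setoid.refl _⟩)

lemma glue_symm {x y : Fin n} (h : glue l₁ π₁ π' x y) : glue l₁ π₁ π' y x := by
  rcases h with ⟨hx, hy, h⟩ | ⟨hx, hy, h⟩ | ⟨hx, hy, h1, h2⟩ | ⟨hx, hy, h1, h2⟩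
  · exact Or.inl ⟨hy, hx, Setoid.symm h⟩
  · exact Or.inr (Or.inl ⟨hy, hx, Setoid.symm h⟩)
  · exact Or.inr (Or.inr (Or.inr ⟨hy, hx, h1, h2⟩))
  · exact Or.inr (Or.inr (Or.inl ⟨hy, hx, h1, h2⟩))

lemma glue_trans {x y z : Fin n} (hxy : glue l₁ π₁ π' x y)
    (hyz : glue l₁ π₁ π' y z) : glue l₁ π₁ π' x z := by
  rcases hxy with ⟨hx, hy, h⟩ | ⟨hx, hy, h⟩ | ⟨hx, hy, h1, h2⟩ | ⟨hx, hy, h1, h2⟩ <;>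
    rcases hyz with ⟨hy', hz, h'⟩ | ⟨hy', hz, h'⟩ | ⟨hy', hz, h1', h2'⟩ |
      ⟨hy', hz, h1', h2'⟩
  · exact Or.inl ⟨hx, hz, Setoid.trans h h'⟩
  · have e := le_antisymm (Set.mem_Iic.mp hy) (Set.mem_Ici.mp hy'); subst e
    exact Or.inr (Or.inr (Or.inl ⟨hx, hz, h, h'⟩))
  · exact Or.inr (Or.inr (Or.inl ⟨hx, hz, Setoid.trans h h1', h2'⟩))
  · have e := le_antisymm (Set.mem_Iic.mp hy) (Set.mem_Ici.mp hy'); subst e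
    exact Or.inl ⟨hx, hz, Setoid.trans h (Setoid.symm h1')⟩
  · have e := le_antisymm (Set.mem_Iic.mp hy') (Set.mem_Ici.mp hy); subst e
    exact Or.inr (Or.inr (Or.inr ⟨hx, hz, Setoid.symm h', Setoid.symm h⟩))
  · exact Or.inr (Or.inl ⟨hx, hz, Setoid.trans h h'⟩)
  · have e := le_antisymm (Set.mem_Iic.mp hy') (Set.mem_Ici.mp hy); subst e
    exact Or.inr (Or.inl ⟨hx, hz, Setoid.trans h h2'⟩)
  · exact Or.inr (Or.inr (Or.inr ⟨hx, hz, h1', Setoid.trans h2' (Setoid.symm h)⟩))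
  · have e := le_antisymm (Set.mem_Iic.mp hy') (Set.mem_Ici.mp hy); subst e
    exact Or.inl ⟨hx, hz, Setoid.trans h1 h'⟩
  · exact Or.inr (Or.inr (Or.inl ⟨hx, hz, h1, Setoid.trans h2 h'⟩))
  · have e := le_antisymm (Set.mem_Iic.mp hy') (Set.mem_Ici.mp hy); subst e
    exact Or.inr (Or.inr (Or.inl ⟨hx, hz, h1, h2'⟩))
  · exact Or.inl ⟨hx, hz, Setoid.trans h1 (Setoid.symm h1')⟩
  · exact Or.inr (Or.inr (Or.inr ⟨hx, hz, Setoid.trans (Setoid.symm h') h1, h2⟩))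
  · have e := le_antisymm (Set.mem_Iic.mp hy) (Set.mem_Ici.mp hy'); subst e
    exact Or.inr (Or.inl ⟨hx, hz, Setoid.trans (Setoid.symm h2) h'⟩)
  · exact Or.inr (Or.inl ⟨hx, hz, Setoid.trans (Setoid.symm h2) h2'⟩)
  · have e := le_antisymm (Set.mem_Iic.mp hy) (Set.mem_Ici.mp hy'); subst e
    exact Or.inr (Or.inr (Or.inr ⟨hx, hz, h1', h2⟩))

end Aux

/-- Let `l₁` be the least element of `χ⁻¹(c) ∩ {2,…,n−1}`.  The map
`α₁'(π) = (π|_{[1,l₁]}, π|_{[l₁,n]})` from `IBNC(χ)` to `IBNC(χ₁) × IBNC(χ')` is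
surjective: for every `π₁ ∈ IBNC(χ₁)` and `π' ∈ IBNC(χ')`, the partition obtained by
keeping all blocks of `π₁` and `π'` not containing `l₁` and merging the blocks containing
`l₁` belongs to `IBNC(χ)` (and restricts to `π₁` and `π'`). -/
theorem restrict_pair_surjective (n : ℕ) (χ : Fin n → Letter) (l₁ : Fin n)
    (h0 : 0 < (l₁ : ℕ)) (hn : (l₁ : ℕ) + 2 ≤ n) (hc : χ l₁ = Letter.c)
    (hmin : ∀ j : Fin n, χ j = Letter.c → 0 < (j : ℕ) → (j : ℕ) + 2 ≤ n → l₁ ≤ j)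
    (π₁ : Setoid (Set.Iic l₁)) (hπ₁ : π₁ ∈ IBNC (restChi (Set.Iic l₁) χ))
    (π' : Setoid (Set.Ici l₁)) (hπ' : π' ∈ IBNC (restChi (Set.Ici l₁) χ)) :
    ∃ π ∈ IBNC χ, (∀ x y : Fin n, π x y ↔ glue l₁ π₁ π' x y) ∧
      restrict (Set.Iic l₁) π = π₁ ∧ restrict (Set.Ici l₁) π = π' := by
  classical
  set lI : Set.Iic l₁ := ⟨l₁, Set.self_mem_Iic⟩ with hlI
  set lJ : Set.Ici l₁ := ⟨l₁, Set.self_mem_Ici⟩ with hlJ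
  refine ⟨⟨glue l₁ π₁ π', ⟨glue_refl, glue_symm, glue_trans⟩⟩, ⟨?_, ?_⟩,
    fun x y => Iff.rfl, ?_, ?_⟩
  · -- ChiNoncrossing
    intro s₁ r₁ s₂ r₂ o1 o2 o3 hs hr
    show glue l₁ π₁ π' s₁ r₁
    rcases hs with ⟨hs₁, hs₂, hS⟩ | ⟨hs₁, hs₂, hS⟩ | ⟨hs₁, hs₂, hS1, hS2⟩ |
        ⟨hs₁, hs₂, hS1, hS2⟩ <;>
      rcases hr with ⟨hr₁, hr₂, hR⟩ | ⟨hr₁, hr₂, hR⟩ | ⟨hr₁, hr₂, hR1, hR2⟩ |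
        ⟨hr₁, hr₂, hR1, hR2⟩
    · exact Or.inl ⟨hs₁, hr₁, hπ₁.1 ⟨s₁, hs₁⟩ ⟨r₁, hr₁⟩ ⟨s₂, hs₂⟩ ⟨r₂, hr₂⟩
        (chiLT_rest.mpr o1) (chiLT_rest.mpr o2) (chiLT_rest.mpr o3) hS hR⟩
    · exact (lemX hc hr₁ hs₂ hr₂ o2 o3).elim
    · rcases (lemA hc hs₂ hr₂ o3).2.1 with he | hlt
      · subst he
        exact Or.inl ⟨hs₁, hr₁, Setoid.trans hS (Setoid.symm hR1)⟩
      · exact Or.inl ⟨hs₁, hr₁, hπ₁.1 ⟨s₁, hs₁⟩ ⟨r₁, hr₁⟩ ⟨s₂, hs₂⟩ lI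
          (chiLT_rest.mpr o1) (chiLT_rest.mpr o2) (chiLT_rest.mpr hlt) hS hR1⟩
    · rcases (lemA hc hs₁ hr₁ o1).2.1 with he | hlt
      · subst he
        exact Or.inr (Or.inr (Or.inl ⟨hs₁, hr₁, Setoid.refl _, hR2⟩))
      · have h2 := (lemB hc hr₁ hs₂ o2).2.1
        have key := hπ₁.1 ⟨s₁, hs₁⟩ lI ⟨s₂, hs₂⟩ ⟨r₂, hr₂⟩ (chiLT_rest.mpr hlt)
          (chiLT_rest.mpr h2) (chiLT_rest.mpr o3) hS (Setoid.symm hR1)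
        exact Or.inr (Or.inr (Or.inl ⟨hs₁, hr₁, key, hR2⟩))
    · exact (lemX hc hs₁ hr₁ hs₂ o1 o2).elim
    · exact Or.inr (Or.inl ⟨hs₁, hr₁, hπ'.1 ⟨s₁, hs₁⟩ ⟨r₁, hr₁⟩ ⟨s₂, hs₂⟩ ⟨r₂, hr₂⟩
        (chiLT_rest.mpr o1) (chiLT_rest.mpr o2) (chiLT_rest.mpr o3) hS hR⟩)
    · exact (lemX hc hs₁ hr₁ hs₂ o1 o2).elim
    · rcases lemC hc hs₁ with he | hlt
      · subst he
        exact Or.inr (Or.inl ⟨hs₁, hr₁, hR2⟩)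
      · have key := hπ'.1 lJ ⟨s₁, hs₁⟩ ⟨r₁, hr₁⟩ ⟨s₂, hs₂⟩ (chiLT_rest.mpr hlt)
          (chiLT_rest.mpr o1) (chiLT_rest.mpr o2) hR2 hS
        exact Or.inr (Or.inl ⟨hs₁, hr₁, Setoid.trans (Setoid.symm key) hR2⟩)
    · rcases (lemA hc hr₁ hs₂ o2).2.1 with he | hlt
      · subst he
        exact Or.inl ⟨hs₁, hr₁, hS1⟩
      · have h3 := (lemB hc hs₂ hr₂ o3).2.1
        have key := hπ₁.1 ⟨s₁, hs₁⟩ ⟨r₁, hr₁⟩ lI ⟨r₂, hr₂⟩ (chiLT_rest.mpr o1)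
          (chiLT_rest.mpr hlt) (chiLT_rest.mpr h3) hS1 hR
        exact Or.inl ⟨hs₁, hr₁, key⟩
    · rcases (lemA hc hs₁ hr₁ o1).2.2 with he | hlt
      · subst he
        exact Or.inr (Or.inr (Or.inl ⟨hs₁, hr₁, hS1, Setoid.refl _⟩))
      · have key := hπ'.1 lJ ⟨r₁, hr₁⟩ ⟨s₂, hs₂⟩ ⟨r₂, hr₂⟩ (chiLT_rest.mpr hlt)
          (chiLT_rest.mpr o2) (chiLT_rest.mpr o3) hS2 hR
        exact Or.inr (Or.inr (Or.inl ⟨hs₁, hr₁, hS1, key⟩))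
    · exact Or.inl ⟨hs₁, hr₁, Setoid.trans hS1 (Setoid.symm hR1)⟩
    · exact Or.inr (Or.inr (Or.inl ⟨hs₁, hr₁, hS1, hR2⟩))
    · have h1 := (lemB hc hs₁ hr₁ o1).2.1
      have key := hπ₁.1 lI ⟨r₁, hr₁⟩ ⟨s₂, hs₂⟩ ⟨r₂, hr₂⟩ (chiLT_rest.mpr h1)
        (chiLT_rest.mpr o2) (chiLT_rest.mpr o3) (Setoid.symm hS1) hR
      exact Or.inr (Or.inr (Or.inr ⟨hs₁, hr₁, Setoid.symm key, hS2⟩))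
    · exact (lemX hc hr₁ hs₂ hr₂ o2 o3).elim
    · exact Or.inr (Or.inr (Or.inr ⟨hs₁, hr₁, hR1, hS2⟩))
    · exact Or.inr (Or.inl ⟨hs₁, hr₁, Setoid.trans (Setoid.symm hS2) hR2⟩)
  · -- ChiInterval
    intro i j k hij hjk hcj hik
    show glue l₁ π₁ π' i j
    rcases hik with ⟨hi, hk, h⟩ | ⟨hi, hk, h⟩ | ⟨hi, hk, h1, h2⟩ | ⟨hi, hk, h1, h2⟩
    · have hj : j ∈ Set.Iic l₁ := le_of_lt (lt_of_lt_of_le hjk hk)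
      exact Or.inl ⟨hi, hj, hπ₁.2 ⟨i, hi⟩ ⟨j, hj⟩ ⟨k, hk⟩ hij hjk hcj h⟩
    · have hj : j ∈ Set.Ici l₁ := le_of_lt (lt_of_le_of_lt hi hij)
      exact Or.inr (Or.inl ⟨hi, hj, hπ'.2 ⟨i, hi⟩ ⟨j, hj⟩ ⟨k, hk⟩ hij hjk hcj h⟩)
    · rcases lt_trichotomy j l₁ with hl | hl | hl
      · have hj : j ∈ Set.Iic l₁ := le_of_lt hl
        exact Or.inl ⟨hi, hj, hπ₁.2 ⟨i, hi⟩ ⟨j, hj⟩ lI hij hl hcj h1⟩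
      · subst hl
        exact Or.inr (Or.inr (Or.inl ⟨hi, Set.self_mem_Ici, h1, Setoid.refl _⟩))
      · have hj : j ∈ Set.Ici l₁ := le_of_lt hl
        exact Or.inr (Or.inr (Or.inl ⟨hi, hj, h1,
          hπ'.2 lJ ⟨j, hj⟩ ⟨k, hk⟩ hl hjk hcj h2⟩))
    · exact absurd (lt_of_lt_of_le (lt_trans hij hjk) hk) (not_lt.mpr hi)
  · -- restriction to Iic
    apply Setoid.ext
    intro a b
    show glue l₁ π₁ π' a.1 b.1 ↔ π₁ a b
    constructor
    · rintro (⟨hx, hy, h⟩ | ⟨hx, hy, h⟩ | ⟨hx, hy, h1, h2⟩ | ⟨hx, hy, h1, h2⟩)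
      · exact h
      · have e1 : a = lI := Subtype.ext (le_antisymm a.2 hx)
        have e2 : b = lI := Subtype.ext (le_antisymm b.2 hy)
        rw [e1, e2]
      · have e : b = lI := Subtype.ext (le_antisymm b.2 hy)
        rw [e]; exact h1
      · have e : a = lI := Subtype.ext (le_antisymm a.2 hx)
        rw [e]; exact Setoid.symm h1
    · intro h
      exact Or.inl ⟨a.2, b.2, h⟩
  · -- restriction to Ici
    apply Setoid.ext
    intro a b
    show glue l₁ π₁ π' a.1 b.1 ↔ π' a b
    constructor
    · rintro (⟨hx, hy, h⟩ | ⟨hx, hy, h⟩ | ⟨hx, hy, h1, h2⟩ | ⟨hx, hy, h1, h2⟩)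
      · have e1 : a = lJ := Subtype.ext (le_antisymm hx a.2)
        have e2 : b = lJ := Subtype.ext (le_antisymm hy b.2)
        rw [e1, e2]
      · exact h
      · have e : a = lJ := Subtype.ext (le_antisymm hx a.2)
        rw [e]; exact h2
      · have e : b = lJ := Subtype.ext (le_antisymm hy b.2)
        rw [e]; exact Setoid.symm h2
    · intro h
      exact Or.inr (Or.inl ⟨a.2, b.2, h⟩)

end FFB
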